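/- Let I be a finite nonempty index set of contexts, V a finite nonempty vocabulary type. Suppose given: context weights D : I → ℝ with D(i) > 0 for all i; for each i ∈ I a data distribution d_i : V → ℝ with d_i(y) > 0 for all y ∈ V; and two families of strictly positive probability mass functions on V, p_i (the fine-tuned policy π_θ(· | context i)) and q_i (the aligned policy π_aligned(· | context i)), each summing to 1 over V. Define the loss ℓ̃ := ∑_{i ∈ I} D(i) · ∑_{y ∈ V} d_i(y) · max{ log q_i(y) − log p_i(y), 0 }. Then ℓ̃ ≥ 0 always, and ℓ̃ = 0 if and only if p_i(y) = q_i(y) for all i ∈ I and all y ∈ V. -/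
import Mathlib


/-- The hinge-type limiting loss
`ℓ̃ = ∑_i D(i) · ∑_y d_i(y) · max{log q_i(y) − log p_i(y), 0}` over positive context
weights `D`, strictly positive data distributions `d_i`, and strictly positive probability
mass functions `p_i` (fine-tuned) and `q_i` (aligned), is nonnegative, and vanishes
if and only if `p_i(y) = q_i(y)` for all contexts `i` and tokens `y`. -/
theorem stmt10 {I V : Type*} [Fintype I] [Nonempty I] [Fintype V] [Nonempty V]
    (D : I → ℝ) (hD : ∀ i, 0 < D i)
    (d : I → V → ℝ) (hd : ∀ i y, 0 < d i y)
    (p q : I → V → ℝ) (hp : ∀ i y, 0 < p i y) (hq : ∀ i y, 0 < q i y)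
    (hp1 : ∀ i, ∑ y, p i y = 1) (hq1 : ∀ i, ∑ y, q i y = 1) :
    0 ≤ ∑ i, D i * ∑ y, d i y * max (Real.log (q i y) - Real.log (p i y)) 0 ∧
    ((∑ i, D i * ∑ y, d i y * max (Real.log (q i y) - Real.log (p i y)) 0) = 0 ↔
      ∀ i y, p i y = q i y) := by
  have hterm : ∀ i y, 0 ≤ d i y * max (Real.log (q i y) - Real.log (p i y)) 0 :=
    fun i y => mul_nonneg (hd i y).le (le_max_right _ _)
  have hinner : ∀ i, 0 ≤ ∑ y, d i y * max (Real.log (q i y) - Real.log (p i y)) 0 :=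
    fun i => Finset.sum_nonneg fun y _ => hterm i y
  have houter : ∀ i, 0 ≤ D i * ∑ y, d i y * max (Real.log (q i y) - Real.log (p i y)) 0 :=
    fun i => mul_nonneg (hD i).le (hinner i)
  have hnn : 0 ≤ ∑ i, D i * ∑ y, d i y * max (Real.log (q i y) - Real.log (p i y)) 0 :=
    Finset.sum_nonneg fun i _ => houter i
  refine ⟨hnn, ?_, ?_⟩
  · intro h0 i y
    have houter0 : ∀ i ∈ Finset.univ,
        D i * ∑ y, d i y * max (Real.log (q i y) - Real.log (p i y)) 0 = 0 :=
      (Finset.sum_eq_zero_iff_of_nonneg (fun i _ => houter i)).mp h0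
    have hfix : ∀ i, ∑ y, d i y * max (Real.log (q i y) - Real.log (p i y)) 0 = 0 := by
      intro i
      have := houter0 i (Finset.mem_univ i)
      rcases mul_eq_zero.mp this with h | h
      · exact absurd h (hD i).ne'
      · exact h
    -- each term zero
    have hqlep : ∀ i y, q i y ≤ p i y := by
      intro i y
      have hterm0 : d i y * max (Real.log (q i y) - Real.log (p i y)) 0 = 0 :=
        (Finset.sum_eq_zero_iff_of_nonneg (fun y _ => hterm i y)).mp (hfix i) y
          (Finset.mem_univ y)
      rcases mul_eq_zero.mp hterm0 with h | h
      · exact absurd h (hd i y).ne'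
      · have hle : Real.log (q i y) ≤ Real.log (p i y) := by
          by_contra hlt
          push_neg at hlt
          have : max (Real.log (q i y) - Real.log (p i y)) 0
              = Real.log (q i y) - Real.log (p i y) :=
            max_eq_left (by linarith)
          rw [this] at h; linarith
        exact (Real.log_le_log_iff (hq i y) (hp i y)).mp hle
    -- q ≤ p pointwise and both sum to 1 ⇒ equal
    have heq : ∀ y, q i y = p i y := by
      by_contra hne
      push_neg at hne
      obtain ⟨y0, hy0⟩ := hne
      have hlt : q i y0 < p i y0 := lt_of_le_of_ne (hqlep i y0) hy0
      have : ∑ y, q i y < ∑ y, p i y :=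
        Finset.sum_lt_sum (fun y _ => hqlep i y) ⟨y0, Finset.mem_univ y0, hlt⟩
      rw [hp1 i, hq1 i] at this
      exact lt_irrefl _ this
    exact (heq y).symm
  · intro h
    apply Finset.sum_eq_zero
    intro i _
    have : ∑ y, d i y * max (Real.log (q i y) - Real.log (p i y)) 0 = 0 := by
      apply Finset.sum_eq_zero
      intro y _
      rw [h i y, sub_self, max_self, mul_zero]
    rw [this, mul_zero]
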